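/- Let P be a closed convex cone in R^d that is spanning and pointed with interior Ω. If (x_n) is a sequence in Ω converging to 0, then there exists a subsequence (x_{n_k}) that decreases to 0, i.e., x_{n_k} - x_{n_{k+1}} ∈ Ω for all k and x_{n_k} → 0. -/
import Mathlib

theorem stmt3 {d : ℕ} (P : Set (EuclideanSpace ℝ (Fin d)))
    (hclosed : IsClosed P) (hconv : Convex ℝ P)
    (hcone : ∀ c : ℝ, 0 ≤ c → ∀ x ∈ P, c • x ∈ P)
    (hspan : ∀ v : EuclideanSpace ℝ (Fin d), ∃ x ∈ P, ∃ y ∈ P, v = x - y)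
    (hpointed : P ∩ (-P) = {0})
    (x : ℕ → EuclideanSpace ℝ (Fin d))
    (hx : ∀ n, x n ∈ interior P)
    (hlim : Filter.Tendsto x Filter.atTop (nhds 0)) :
    ∃ φ : ℕ → ℕ, StrictMono φ ∧
      (∀ k, x (φ k) - x (φ (k + 1)) ∈ interior P) ∧
      Filter.Tendsto (fun k => x (φ k)) Filter.atTop (nhds 0) := by
  have key : ∀ m : ℕ, ∃ n : ℕ, m < n ∧ x m - x n ∈ interior P := by
    intro m
    have hU : IsOpen {y : EuclideanSpace ℝ (Fin d) | x m - y ∈ interior P} :=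
      isOpen_interior.preimage (by continuity)
    have h0 : (0 : EuclideanSpace ℝ (Fin d)) ∈ {y | x m - y ∈ interior P} := by
      simpa using hx m
    have h := hlim (hU.mem_nhds h0)
    rw [Filter.mem_map, Filter.mem_atTop_sets] at h
    obtain ⟨N, hN⟩ := h
    exact ⟨max (m+1) N, lt_of_lt_of_le (Nat.lt_succ_self m) (le_max_left _ _),
      hN _ (le_max_right _ _)⟩
  choose f hf1 hf2 using key
  refine ⟨fun k => f^[k] 0, strictMono_nat_of_lt_succ (fun k => ?_), fun k => ?_,
    hlim.comp (strictMono_nat_of_lt_succ (fun k => ?_)).tendsto_atTop⟩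
  · rw [Function.iterate_succ_apply']; exact hf1 _
  · simpa only [Function.iterate_succ_apply'] using hf2 (f^[k] 0)
  · rw [Function.iterate_succ_apply']; exact hf1 _
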